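/- Let f(y|μ,σ) be the Gaussian density and fix (a₁*,b₁*,σ₁*),...,(a_{k*}*,b_{k*}*,σ_{k*}*) pairwise distinct with σⱼ* > 0, and distinct gating vectors β₁₁*,...,β₁_{k*}* ∈ ℝ^d. Define g*(y|x) = Σⱼ softmaxⱼ(x) f(y|(aⱼ*)ᵀx + bⱼ*, σⱼ*) where softmaxⱼ(x) = exp((β₁ⱼ*)ᵀx + β₀ⱼ*)/Σₗ exp((β₁ₗ*)ᵀx + β₀ₗ*). Then for almost every x, the set of functions of y given by {∂^{ℓ₂}f/∂μ^{ℓ₂}(y|(aⱼ*)ᵀx + bⱼ*, σⱼ*) : 0 ≤ ℓ₂ ≤ 2} ∪ {g*(y|x)} for each fixed j is linearly independent, provided the softmax weights are not degenerate (g* is a strict mixture of at least two distinct Gaussian components). -/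

import Mathlib

set_option maxHeartbeats 1000000

open Real Finset MeasureTheory

/-- The univariate Gaussian density with mean `μ` and variance `σ`. -/
noncomputable def gaussPDF (μ σ y : ℝ) : ℝ :=
  (Real.sqrt (2 * Real.pi * σ))⁻¹ * Real.exp (-(y - μ) ^ 2 / (2 * σ))

/-- The softmax gating Gaussian mixture of experts conditional density. -/
noncomputable def softmaxGaussMix (d k : ℕ) (β₀ : Fin k → ℝ)
    (β₁ a : Fin k → (Fin d → ℝ)) (b σ : Fin k → ℝ)
    (x : Fin d → ℝ) (y : ℝ) : ℝ :=
  ∑ j, (Real.exp ((∑ i, β₁ j i * x i) + β₀ j) /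
      ∑ l, Real.exp ((∑ i, β₁ l i * x i) + β₀ l)) *
    gaussPDF ((∑ i, a j i * x i) + b j) (σ j) y

open Filter Topology

section Aux

/-- monomial decay -/
lemma monDecay (n : ℕ) {t : ℝ} (ht : 0 < t) :
    Tendsto (fun y : ℝ => y ^ n * Real.exp (-(t * y))) atTop (𝓝 0) := by
  have h1 : Tendsto (fun y : ℝ => t * y) atTop atTop :=
    Tendsto.const_mul_atTop ht tendsto_id
  have h2 := (tendsto_pow_mul_exp_neg_atTop_nhds_zero n).comp h1
  have h3 : Tendsto (fun y : ℝ => (t ^ n)⁻¹ * ((t * y) ^ n * Real.exp (-(t * y)))) atTop (𝓝 ((t ^ n)⁻¹ * 0)) :=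
    h2.const_mul _
  rw [mul_zero] at h3
  refine h3.congr (fun y => ?_)
  field_simp
  ring

lemma quadDecay {t : ℝ} (ht : 0 < t) (e₀ e₁ e₂ : ℝ) :
    Tendsto (fun y : ℝ => (e₀ + e₁ * y + e₂ * y ^ 2) * Real.exp (-(t * y))) atTop (𝓝 0) := by
  have h0 := (monDecay 0 ht).const_mul e₀
  have h1 := (monDecay 1 ht).const_mul e₁
  have h2 := (monDecay 2 ht).const_mul e₂
  have := (h0.add h1).add h2
  simp only [mul_zero, add_zero] at this
  refine this.congr (fun y => ?_)
  ring

lemma quadLimitZero {e₀ e₁ e₂ : ℝ}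
    (h : Tendsto (fun y : ℝ => e₀ + e₁ * y + e₂ * y ^ 2) atTop (𝓝 0)) :
    e₀ = 0 ∧ e₁ = 0 ∧ e₂ = 0 := by
  have hyinv : Tendsto (fun y : ℝ => y⁻¹) atTop (𝓝 0) := tendsto_inv_atTop_zero
  have hy2inv : Tendsto (fun y : ℝ => (y ^ 2)⁻¹) atTop (𝓝 0) := by
    have : Tendsto (fun y : ℝ => y ^ 2) atTop atTop := tendsto_pow_atTop two_ne_zero
    exact this.inv_tendsto_atTop
  have he₂ : e₂ = 0 := by
    have lim1 : Tendsto (fun y : ℝ => (e₀ + e₁ * y + e₂ * y ^ 2) * (y ^ 2)⁻¹) atTop (𝓝 0) := by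
      simpa using h.mul hy2inv
    have lim2 : Tendsto (fun y : ℝ => (e₀ + e₁ * y + e₂ * y ^ 2) * (y ^ 2)⁻¹) atTop (𝓝 e₂) := by
      have t1 : Tendsto (fun y : ℝ => e₀ * (y ^ 2)⁻¹ + e₁ * y⁻¹ + e₂) atTop (𝓝 e₂) := by
        have := ((hy2inv.const_mul e₀).add (hyinv.const_mul e₁)).add
          (tendsto_const_nhds : Tendsto (fun _ : ℝ => e₂) atTop (𝓝 e₂))
        simpa using this
      refine t1.congr' ?_
      filter_upwards [eventually_gt_atTop 0] with y hy
      field_simp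
    exact tendsto_nhds_unique lim2 lim1
  subst he₂
  have he₁ : e₁ = 0 := by
    have lim1 : Tendsto (fun y : ℝ => (e₀ + e₁ * y + 0 * y ^ 2) * y⁻¹) atTop (𝓝 0) := by
      simpa using h.mul hyinv
    have lim2 : Tendsto (fun y : ℝ => (e₀ + e₁ * y + 0 * y ^ 2) * y⁻¹) atTop (𝓝 e₁) := by
      have t1 : Tendsto (fun y : ℝ => e₀ * y⁻¹ + e₁) atTop (𝓝 e₁) := by
        have := (hyinv.const_mul e₀).add
          (tendsto_const_nhds : Tendsto (fun _ : ℝ => e₁) atTop (𝓝 e₁))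
        simpa using this
      refine t1.congr' ?_
      filter_upwards [eventually_gt_atTop 0] with y hy
      field_simp
      ring
    exact tendsto_nhds_unique lim2 lim1
  subst he₁
  have he₀ : e₀ = 0 := by
    have : Tendsto (fun _ : ℝ => e₀) atTop (𝓝 e₀) := tendsto_const_nhds
    refine tendsto_nhds_unique ?_ h
    refine this.congr (fun y => by ring)
  exact ⟨he₀, rfl, rfl⟩

lemma termTendsto (e₀ e₁ e₂ A B C : ℝ) (hABC : A < 0 ∨ (A = 0 ∧ B < 0)) :
    Tendsto (fun y : ℝ => (e₀ + e₁ * y + e₂ * y ^ 2) * Real.exp (A * y ^ 2 + B * y + C))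
      atTop (𝓝 0) := by
  obtain ⟨t, ht, hev⟩ : ∃ t : ℝ, 0 < t ∧ ∀ᶠ y in atTop, A * y ^ 2 + B * y + C ≤ -(t * y) := by
    rcases hABC with hA | ⟨hA, hB⟩
    · refine ⟨1, one_pos, ?_⟩
      filter_upwards [eventually_ge_atTop 1, eventually_ge_atTop ((|B + 1| + |C|) / (-A))]
        with y hy1 hy2
      have h3 : (-A) * y ≥ |B + 1| + |C| := by
        rw [ge_iff_le, ← div_le_iff₀' (by linarith)] at *
        linarith [hy2]
      nlinarith [le_abs_self (B + 1), le_abs_self C, abs_nonneg (B+1), abs_nonneg C]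
    · subst hA
      refine ⟨-B / 2, by linarith, ?_⟩
      filter_upwards [eventually_ge_atTop 1, eventually_ge_atTop ((|C|) / (-B / 2))]
        with y hy1 hy2
      have h3 : (-B / 2) * y ≥ |C| := by
        rw [ge_iff_le, ← div_le_iff₀' (by linarith)]
        linarith
      nlinarith [le_abs_self C]
  refine squeeze_zero_norm' ?_ (quadDecay ht |e₀| |e₁| |e₂|)
  filter_upwards [hev, eventually_ge_atTop 0] with y hq hy0
  have hP : |e₀ + e₁ * y + e₂ * y ^ 2| ≤ |e₀| + |e₁| * y + |e₂| * y ^ 2 := by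
    calc |e₀ + e₁ * y + e₂ * y ^ 2| ≤ |e₀ + e₁ * y| + |e₂ * y ^ 2| := abs_add_le _ _
    _ ≤ |e₀| + |e₁ * y| + |e₂ * y ^ 2| := by linarith [abs_add_le e₀ (e₁ * y)]
    _ = |e₀| + |e₁| * y + |e₂| * y ^ 2 := by
        rw [abs_mul, abs_mul, abs_of_nonneg hy0, abs_of_nonneg (by positivity : (0:ℝ) ≤ y ^ 2)]
  have hEpos : (0:ℝ) < Real.exp (A * y ^ 2 + B * y + C) := Real.exp_pos _
  have hEle : Real.exp (A * y ^ 2 + B * y + C) ≤ Real.exp (-(t * y)) := Real.exp_le_exp.mpr hq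
  have hnn : 0 ≤ |e₀| + |e₁| * y + |e₂| * y ^ 2 := by positivity
  calc ‖(e₀ + e₁ * y + e₂ * y ^ 2) * Real.exp (A * y ^ 2 + B * y + C)‖
      = |e₀ + e₁ * y + e₂ * y ^ 2| * Real.exp (A * y ^ 2 + B * y + C) := by
        rw [Real.norm_eq_abs, abs_mul, abs_of_pos hEpos]
    _ ≤ (|e₀| + |e₁| * y + |e₂| * y ^ 2) * Real.exp (-(t * y)) :=
        mul_le_mul hP hEle (le_of_lt hEpos) hnn

lemma hasDerivAt_gauss {σ : ℝ} (hσ : σ ≠ 0) (y μ : ℝ) :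
    HasDerivAt (fun m => gaussPDF m σ y) (((y - μ) / σ) * gaussPDF μ σ y) μ := by
  have h1 : HasDerivAt (fun m : ℝ => -(y - m) ^ 2 / (2 * σ)) ((y - μ) / σ) μ := by
    have h2 : HasDerivAt (fun m : ℝ => y - m) (-1) μ := (hasDerivAt_id μ).const_sub y
    have h3 := (h2.pow 2).neg.div_const (2 * σ)
    refine h3.congr_deriv ?_
    field_simp
    ring
  have h4 := (h1.exp).const_mul (Real.sqrt (2 * Real.pi * σ))⁻¹
  refine h4.congr_deriv ?_
  unfold gaussPDF
  ring

lemma deriv_gauss {σ : ℝ} (hσ : σ ≠ 0) (y : ℝ) :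
    deriv (fun m => gaussPDF m σ y) = fun μ => ((y - μ) / σ) * gaussPDF μ σ y :=
  funext fun μ => (hasDerivAt_gauss hσ y μ).deriv

lemma iteratedDeriv_gauss_one {σ : ℝ} (hσ : σ ≠ 0) (y μ : ℝ) :
    iteratedDeriv 1 (fun m => gaussPDF m σ y) μ = ((y - μ) / σ) * gaussPDF μ σ y := by
  rw [iteratedDeriv_one, deriv_gauss hσ]

lemma iteratedDeriv_gauss_two {σ : ℝ} (hσ : σ ≠ 0) (y μ : ℝ) :
    iteratedDeriv 2 (fun m => gaussPDF m σ y) μ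
      = ((y - μ) ^ 2 / σ ^ 2 - 1 / σ) * gaussPDF μ σ y := by
  rw [show (2:ℕ) = 1 + 1 from rfl, iteratedDeriv_succ, iteratedDeriv_one, deriv_gauss hσ]
  have h2 : HasDerivAt (fun m : ℝ => (y - m) / σ) (-(1 / σ)) μ := by
    have := ((hasDerivAt_id μ).const_sub y).div_const σ
    refine this.congr_deriv ?_
    ring
  have h5 := h2.mul (hasDerivAt_gauss hσ y μ)
  rw [show deriv (fun m => (y - m) / σ * gaussPDF m σ y) μ = _ from h5.deriv]
  ring

noncomputable def sumLin {d : ℕ} (v : Fin d → ℝ) : (Fin d → ℝ) →ₗ[ℝ] ℝ where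
  toFun x := ∑ i, v i * x i
  map_add' x y := by simp [mul_add, Finset.sum_add_distrib]
  map_smul' r x := by simp [Finset.mul_sum, mul_left_comm]

lemma hyperplane_null {d : ℕ} {v : Fin d → ℝ} (hv : v ≠ 0) (c : ℝ) :
    volume {x : Fin d → ℝ | ∑ i, v i * x i = c} = 0 := by
  obtain ⟨i₀, hi₀⟩ : ∃ i, v i ≠ 0 := by
    by_contra h
    push_neg at h
    exact hv (funext h)
  set L := sumLin v with hL
  have hLval : ∀ x, L x = ∑ i, v i * x i := fun x => rfl
  set x₀ : Fin d → ℝ := fun i => if i = i₀ then c / v i₀ else 0 with hx₀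
  have hLx₀ : L x₀ = c := by
    rw [hLval]
    rw [Finset.sum_eq_single i₀]
    · simp only [hx₀, if_pos rfl]
      field_simp
    · intro i _ hi
      simp [hx₀, hi]
    · simp
  set S := AffineSubspace.mk' x₀ (LinearMap.ker L) with hS
  have hset : {x : Fin d → ℝ | ∑ i, v i * x i = c} = (S : Set (Fin d → ℝ)) := by
    ext x
    simp only [Set.mem_setOf_eq, hS, SetLike.mem_coe, AffineSubspace.mem_mk',
      vsub_eq_sub, LinearMap.mem_ker, map_sub, hLx₀]
    rw [← hLval, sub_eq_zero]
  have hne : S ≠ ⊤ := by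
    intro htop
    have : S.direction = ⊤ := by rw [htop]; exact AffineSubspace.direction_top ℝ _ _
    rw [hS, AffineSubspace.direction_mk', LinearMap.ker_eq_top] at this
    have := congrArg (fun f : (Fin d → ℝ) →ₗ[ℝ] ℝ => f (Pi.single i₀ 1)) this
    simp only [LinearMap.zero_apply] at this
    rw [hLval] at this
    rw [Finset.sum_eq_single i₀] at this
    · simp [Pi.single_apply] at this
      exact hi₀ this
    · intro i _ hi; simp [Pi.single_apply, hi]
    · simp
  rw [hset]
  exact Measure.addHaar_affineSubspace volume S hne

lemma ae_distinct {d k : ℕ} (as : Fin k → Fin d → ℝ) (bs σs : Fin k → ℝ)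
    (hdist : Function.Injective fun j => (as j, bs j, σs j)) :
    ∀ᵐ x : Fin d → ℝ, ∀ j j' : Fin k, j ≠ j' →
      (((∑ i, as j i * x i) + bs j, σs j) : ℝ × ℝ)
        ≠ (((∑ i, as j' i * x i) + bs j', σs j') : ℝ × ℝ) := by
  rw [ae_all_iff]
  intro j
  rw [ae_all_iff]
  intro j'
  by_cases hjj : j = j'
  · filter_upwards with x hne
    exact absurd hjj hne
  by_cases hs : σs j = σs j'
  · by_cases ha : as j = as j'
    · have hb : bs j ≠ bs j' := by
        intro hb
        exact hjj (hdist (by simp [ha, hb, hs]))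
      filter_upwards with x _ heq
      rw [Prod.mk.injEq, ha] at heq
      exact hb (by linarith [heq.1])
    · have hv : as j - as j' ≠ 0 := sub_ne_zero.mpr ha
      rw [ae_iff]
      refine measure_mono_null ?_ (hyperplane_null hv (bs j' - bs j))
      intro x hx
      simp only [Set.mem_setOf_eq, _root_.not_imp, not_not] at hx
      have heq := hx.2
      rw [Prod.mk.injEq] at heq
      simp only [Set.mem_setOf_eq, Pi.sub_apply, sub_mul]
      rw [Finset.sum_sub_distrib]
      linarith [heq.1]
  · filter_upwards with x _ heq
    rw [Prod.mk.injEq] at heq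
    exact hs heq.2

lemma gaussCore {k : ℕ} (μ σ : Fin k → ℝ) (hσ : ∀ l, 0 < σ l) (s : Finset (Fin k))
    (hd : ∀ l ∈ s, ∀ l' ∈ s, l ≠ l' → (μ l, σ l) ≠ (μ l', σ l'))
    (e : Fin k → Fin 3 → ℝ)
    (H : ∀ y : ℝ, ∑ l ∈ s, (e l 0 + e l 1 * y + e l 2 * y ^ 2) *
        Real.exp (-(y - μ l) ^ 2 / (2 * σ l)) = 0) :
    ∀ l ∈ s, ∀ m, e l m = 0 := by
  induction s using Finset.strongInduction with
  | _ s ih =>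
    rcases s.eq_empty_or_nonempty with rfl | hne
    · simp
    obtain ⟨a, has, hmax⟩ := s.exists_max_image (fun l => toLex (σ l, μ l)) hne
    -- the maximal coefficient polynomial tends to 0
    have hEpos : ∀ (l : Fin k) (y : ℝ), (0:ℝ) < Real.exp (-(y - μ l) ^ 2 / (2 * σ l)) :=
      fun l y => Real.exp_pos _
    have hrep : ∀ y : ℝ, e a 0 + e a 1 * y + e a 2 * y ^ 2 = ∑ l ∈ s.erase a,
        -((e l 0 + e l 1 * y + e l 2 * y ^ 2) *
          Real.exp ((-(y - μ l) ^ 2 / (2 * σ l)) - (-(y - μ a) ^ 2 / (2 * σ a)))) := by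
      intro y
      have h1 := Finset.add_sum_erase s (fun l => (e l 0 + e l 1 * y + e l 2 * y ^ 2) *
        Real.exp (-(y - μ l) ^ 2 / (2 * σ l))) has
      rw [H y] at h1
      have h2 : (e a 0 + e a 1 * y + e a 2 * y ^ 2) * Real.exp (-(y - μ a) ^ 2 / (2 * σ a))
          = ∑ l ∈ s.erase a, -((e l 0 + e l 1 * y + e l 2 * y ^ 2) *
            Real.exp (-(y - μ l) ^ 2 / (2 * σ l))) := by
        rw [Finset.sum_neg_distrib]; linarith
      have h3 := congrArg (fun z => z / Real.exp (-(y - μ a) ^ 2 / (2 * σ a))) h2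
      rw [mul_div_assoc, div_self (ne_of_gt (hEpos a y)), mul_one, Finset.sum_div] at h3
      rw [h3]
      refine Finset.sum_congr rfl fun l hl => ?_
      rw [neg_div]
      congr 1
      rw [mul_div_assoc, ← Real.exp_sub]
    have hT : Tendsto (fun y : ℝ => e a 0 + e a 1 * y + e a 2 * y ^ 2) atTop (𝓝 0) := by
      have hsum : Tendsto (fun y : ℝ => ∑ l ∈ s.erase a,
          -((e l 0 + e l 1 * y + e l 2 * y ^ 2) *
            Real.exp ((-(y - μ l) ^ 2 / (2 * σ l)) - (-(y - μ a) ^ 2 / (2 * σ a)))))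
          atTop (𝓝 0) := by
        have : (0:ℝ) = ∑ l ∈ s.erase a, (0:ℝ) := by simp
        rw [this]
        refine tendsto_finset_sum _ fun l hl => ?_
        have hls : l ∈ s := Finset.mem_of_mem_erase hl
        have hla : l ≠ a := Finset.ne_of_mem_erase hl
        -- exponent as quadratic
        set A : ℝ := 1 / (2 * σ a) - 1 / (2 * σ l) with hA
        set B : ℝ := μ l / σ l - μ a / σ a with hB
        set C : ℝ := μ a ^ 2 / (2 * σ a) - μ l ^ 2 / (2 * σ l) with hC
        have hq : ∀ y : ℝ, (-(y - μ l) ^ 2 / (2 * σ l)) - (-(y - μ a) ^ 2 / (2 * σ a))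
            = A * y ^ 2 + B * y + C := by
          intro y
          have h1 := (hσ l).ne'
          have h2 := (hσ a).ne'
          rw [hA, hB, hC]
          field_simp
          ring
        have hlt : toLex (σ l, μ l) < toLex (σ a, μ a) := by
          refine lt_of_le_of_ne (hmax l hls) ?_
          intro hcontra
          apply hd l hls a has hla
          have : (σ l, μ l) = (σ a, μ a) := by
            simpa using congrArg ofLex hcontra
          rw [Prod.mk.injEq] at this ⊢
          exact ⟨this.2, this.1⟩
        have hcase : A < 0 ∨ (A = 0 ∧ B < 0) := by
          rw [Prod.Lex.lt_iff] at hlt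
          rcases hlt with h | ⟨h1, h2⟩
          · left
            simp only [ofLex_toLex] at h
            have := hσ l; have := hσ a
            rw [hA]
            rw [sub_neg]
            apply one_div_lt_one_div_of_lt <;> nlinarith
          · right
            simp only [ofLex_toLex] at h1 h2
            constructor
            · rw [hA, h1, sub_self]
            · have h3 := hσ a
              rw [hB, h1, sub_neg, div_lt_div_iff₀ h3 h3]
              nlinarith
        have := (termTendsto (e l 0) (e l 1) (e l 2) A B C hcase).neg
        rw [neg_zero] at this
        refine this.congr fun y => ?_
        rw [hq y]
      exact hsum.congr fun y => (hrep y).symm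
    obtain ⟨h0, h1, h2⟩ := quadLimitZero hT
    have hea : ∀ m : Fin 3, e a m = 0 := by
      intro m; fin_cases m <;> assumption
    -- induction on the erased set
    have hrest := ih (s.erase a) (Finset.erase_ssubset has)
      (fun l hl l' hl' => hd l (Finset.mem_of_mem_erase hl) l' (Finset.mem_of_mem_erase hl'))
      (by
        intro y
        have h1' := Finset.add_sum_erase s (fun l => (e l 0 + e l 1 * y + e l 2 * y ^ 2) *
          Real.exp (-(y - μ l) ^ 2 / (2 * σ l))) has
        rw [H y] at h1'
        simp only [h0, h1, h2] at h1'
        linarith [h1'])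
    intro l hl m
    by_cases hla : l = a
    · subst hla; exact hea m
    · exact hrest l (Finset.mem_erase.mpr ⟨hla, hl⟩) m

end Aux

/-- For almost every `x`, the mean-derivatives of the Gaussian density up to order 2
at the `j`-th component together with the mixture density `g*(·|x)` form a linearly
independent family of functions of `y`, provided the mixture has at least two
distinct components. -/
theorem gaussian_derivatives_and_mixture_linear_independent (d k : ℕ) (hk : 2 ≤ k)
    (β₀s : Fin k → ℝ) (β₁s as : Fin k → (Fin d → ℝ)) (bs σs : Fin k → ℝ)
    (hσ : ∀ j, 0 < σs j)
    (hdist : Function.Injective (fun j => (as j, bs j, σs j)))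
    (hβ : Function.Injective β₁s) :
    ∀ᵐ x : Fin d → ℝ, ∀ j : Fin k, ∀ (c : Fin 3 → ℝ) (ω : ℝ),
      (∀ y : ℝ,
        (∑ l : Fin 3, c l *
          iteratedDeriv l (fun m => gaussPDF m (σs j) y) ((∑ i, as j i * x i) + bs j))
          + ω * softmaxGaussMix d k β₀s β₁s as bs σs x y = 0) →
      (∀ l, c l = 0) ∧ ω = 0 := by
  filter_upwards [ae_distinct as bs σs hdist] with x hx
  intro j c ω H
  have hσj : σs j ≠ 0 := (hσ j).ne'
  set μf : Fin k → ℝ := fun l => (∑ i, as l i * x i) + bs l with hμf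
  have hpair : ∀ l l', l ≠ l' → ((μf l, σs l) : ℝ × ℝ) ≠ (μf l', σs l') :=
    fun l l' h => hx l l' h
  set K : Fin k → ℝ := fun l => (Real.sqrt (2 * Real.pi * σs l))⁻¹ with hKdef
  have hK : ∀ l, 0 < K l := fun l => by
    have hs := hσ l
    have h1 : 0 < 2 * Real.pi * σs l := by positivity
    exact inv_pos.mpr (Real.sqrt_pos.mpr h1)
  set D : ℝ := ∑ l, Real.exp ((∑ i, β₁s l i * x i) + β₀s l) with hDdef
  have hD : 0 < D := Finset.sum_pos (fun l _ => Real.exp_pos _)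
    ⟨⟨0, by omega⟩, Finset.mem_univ _⟩
  set wt : Fin k → ℝ := fun l => Real.exp ((∑ i, β₁s l i * x i) + β₀s l) / D with hwtdef
  have hwt : ∀ l, 0 < wt l := fun l => div_pos (Real.exp_pos _) hD
  -- mixture as a sum
  have hmix : ∀ y, softmaxGaussMix d k β₀s β₁s as bs σs x y
      = ∑ l, wt l * gaussPDF (μf l) (σs l) y := fun y => rfl
  -- derivative expansion
  have hder : ∀ y, (∑ l : Fin 3, c l *
        iteratedDeriv l (fun m => gaussPDF m (σs j) y) ((∑ i, as j i * x i) + bs j))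
      = c 0 * gaussPDF (μf j) (σs j) y
        + c 1 * (((y - μf j) / σs j) * gaussPDF (μf j) (σs j) y)
        + c 2 * (((y - μf j) ^ 2 / σs j ^ 2 - 1 / σs j) * gaussPDF (μf j) (σs j) y) := by
    intro y
    rw [show (∑ i, as j i * x i) + bs j = μf j from rfl]
    rw [Fin.sum_univ_three]
    simp only [Fin.val_zero, Fin.val_one, Fin.val_two]
    rw [iteratedDeriv_zero, iteratedDeriv_gauss_one hσj, iteratedDeriv_gauss_two hσj]
  -- coefficient family
  set e : Fin k → Fin 3 → ℝ := fun l m =>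
    if l = j then
      (if m = 0 then ω * wt j * K j
          + K j * (c 0 - c 1 * μf j / σs j + c 2 * (μf j ^ 2 / σs j ^ 2 - 1 / σs j))
       else if m = 1 then K j * (c 1 / σs j - 2 * c 2 * μf j / σs j ^ 2)
       else K j * (c 2 / σs j ^ 2))
    else (if m = 0 then ω * wt l * K l else 0) with hedef
  have hg : ∀ l y, gaussPDF (μf l) (σs l) y
      = K l * Real.exp (-(y - μf l) ^ 2 / (2 * σs l)) := fun l y => rfl
  have Hcore : ∀ y : ℝ, ∑ l, (e l 0 + e l 1 * y + e l 2 * y ^ 2) *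
      Real.exp (-(y - μf l) ^ 2 / (2 * σs l)) = 0 := by
    intro y
    have split : ∀ l, (e l 0 + e l 1 * y + e l 2 * y ^ 2) *
        Real.exp (-(y - μf l) ^ 2 / (2 * σs l))
        = ω * (wt l * gaussPDF (μf l) (σs l) y)
          + (if l = j then
              c 0 * gaussPDF (μf j) (σs j) y
              + c 1 * (((y - μf j) / σs j) * gaussPDF (μf j) (σs j) y)
              + c 2 * (((y - μf j) ^ 2 / σs j ^ 2 - 1 / σs j) * gaussPDF (μf j) (σs j) y)
            else 0) := by
      intro l
      by_cases hl : l = j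
      · subst hl
        rw [hg]
        simp only [hedef, if_pos rfl, if_neg (show ¬((1:Fin 3) = 0) by decide),
          if_neg (show ¬((2:Fin 3) = 0) by decide), if_neg (show ¬((2:Fin 3) = 1) by decide)]
        generalize Real.exp (-(y - μf l) ^ 2 / (2 * σs l)) = E
        simp only [if_true]
        field_simp
        ring
      · rw [hg]
        simp only [hedef, if_neg hl, if_neg (show ¬((1:Fin 3) = 0) by decide),
          if_neg (show ¬((2:Fin 3) = 0) by decide)]
        simp only [ite_true]
        ring
    rw [Finset.sum_congr rfl (fun l _ => split l), Finset.sum_add_distrib,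
      Finset.sum_ite_eq' Finset.univ j, if_pos (Finset.mem_univ j)]
    rw [← Finset.mul_sum, ← hmix y, ← hder y]
    linarith [H y]
  have hzero := gaussCore μf σs hσ Finset.univ
    (fun l _ l' _ h => hpair l l' h) e Hcore
  -- extract conclusions
  have hωzero : ω = 0 := by
    set l₀ : Fin k := if j = ⟨0, by omega⟩ then ⟨1, by omega⟩ else ⟨0, by omega⟩ with hl₀def
    have hl₀ : l₀ ≠ j := by
      rw [hl₀def]
      split_ifs with h
      · rw [h]; simp [Fin.ext_iff]
      · exact fun hc => h hc.symm
    have h0 := hzero l₀ (Finset.mem_univ _) 0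
    rw [hedef] at h0
    simp only [if_neg hl₀, if_pos rfl] at h0
    have := (hwt l₀).ne'
    have := (hK l₀).ne'
    rcases mul_eq_zero.mp h0 with h | h
    · rcases mul_eq_zero.mp h with h' | h'
      · exact h'
      · exact absurd h' ‹wt l₀ ≠ 0›
    · exact absurd h ‹K l₀ ≠ 0›
  have hKj : K j ≠ 0 := (hK j).ne'
  have hc2 : c 2 = 0 := by
    have h2 := hzero j (Finset.mem_univ _) 2
    simp only [hedef, if_pos rfl, if_neg (show ¬((2:Fin 3) = 0) by decide),
      if_neg (show ¬((2:Fin 3) = 1) by decide)] at h2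
    rcases mul_eq_zero.mp h2 with h | h
    · exact absurd h hKj
    · rcases div_eq_zero_iff.mp h with h' | h'
      · exact h'
      · exact absurd h' (pow_ne_zero 2 hσj)
  have hc1 : c 1 = 0 := by
    have h1 := hzero j (Finset.mem_univ _) 1
    simp only [hedef, if_pos rfl, if_neg (show ¬((1:Fin 3) = 0) by decide)] at h1
    rw [hc2] at h1
    rcases mul_eq_zero.mp h1 with h | h
    · exact absurd h hKj
    · field_simp [hσj] at h
      simpa [hσj] using h
  have hc0 : c 0 = 0 := by
    have h0 := hzero j (Finset.mem_univ _) 0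
    simp only [hedef, if_pos rfl] at h0
    rw [hωzero, hc1, hc2] at h0
    norm_num at h0
    rcases h0 with h | h
    · exact absurd h hKj
    · exact h
  refine ⟨fun l => ?_, hωzero⟩
  fin_cases l
  · exact hc0
  · exact hc1
  · exact hc2
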